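/- Let T: X → X be a homeomorphism of a compact metric space and Φ the suspension flow over T on the suspension space X_T. If ρ_FK(x,y) = 0 with respect to T, then for any r, s ∈ [0,1) we have ρ̃_FK((x,r),(y,s)) = 0 with respect to Φ. -/

import Mathlib

open MeasureTheory Filter Set Topology
open scoped ENNReal symmDiff

section FK

structure IsFlow {X : Type*} [TopologicalSpace X] (Φ : ℝ → X → X) : Prop where
  cont : Continuous fun p : ℝ × X => Φ p.1 p.2
  map_zero : ∀ x, Φ 0 x = x
  map_add : ∀ t s x, Φ (t + s) x = Φ s (Φ t x)

variable {X : Type*} [MetricSpace X]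

/-- `x` and `y` are `(t,ε,δ)`-matchable: there are measurable `A, A' ⊆ [0,t]` of Lebesgue
measure `> (1-ε)t` and an increasing absolutely continuous onto map `h : A → A'`
(with a.e. derivative `h'`) with `|h' - 1| < ε` and `d(φ^s x, φ^{h s} y) < δ` on `A`. -/
def Matchable (Φ : ℝ → X → X) (x y : X) (t ε δ : ℝ) : Prop :=
  ∃ (A A' : Set ℝ) (h h' : ℝ → ℝ),
    MeasurableSet A ∧ MeasurableSet A' ∧
    A ⊆ Icc 0 t ∧ A' ⊆ Icc 0 t ∧
    ENNReal.ofReal ((1 - ε) * t) < volume A ∧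
    ENNReal.ofReal ((1 - ε) * t) < volume A' ∧
    MapsTo h A A' ∧ SurjOn h A A' ∧ StrictMonoOn h A ∧
    (∀ B ⊆ A, MeasurableSet B → volume (h '' B) = ENNReal.ofReal (∫ s in B, h' s)) ∧
    (∀ s ∈ A, |h' s - 1| < ε) ∧
    (∀ s ∈ A, dist (Φ s x) (Φ (h s) y) < δ)

/-- The `(t,δ)`-gap `f̃_{t,δ}(x,y)`; by convention it equals `1` when no matching exists. -/
noncomputable def fkGap (Φ : ℝ → X → X) (t δ : ℝ) (x y : X) : ℝ :=
  sInf ({ε : ℝ | 0 < ε ∧ Matchable Φ x y t ε δ} ∪ {1})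

/-- `f̃_δ(x,y) = limsup_{t → ∞} f̃_{t,δ}(x,y)`. -/
noncomputable def fkDist (Φ : ℝ → X → X) (δ : ℝ) (x y : X) : ℝ :=
  Filter.limsup (fun t => fkGap Φ t δ x y) Filter.atTop

/-- The Feldman–Katok pseudometric for flows. -/
noncomputable def rhoFK (Φ : ℝ → X → X) (x y : X) : ℝ :=
  sInf {δ : ℝ | 0 < δ ∧ fkDist Φ δ x y < δ}

/-- Discrete `(n,δ)`-matching of cardinality `k` for a map `T`. -/
def DMatching (T : X → X) (x y : X) (n : ℕ) (δ : ℝ) (k : ℕ) : Prop :=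
  ∃ (D D' : Finset ℕ) (π : ℕ → ℕ),
    D ⊆ Finset.range n ∧ D' ⊆ Finset.range n ∧ D.card = k ∧
    Set.BijOn π ↑D ↑D' ∧ StrictMonoOn π ↑D ∧
    ∀ i ∈ D, dist (T^[i] x) (T^[π i] y) < δ

/-- The discrete `(n,δ)`-gap `f̄_{n,δ}(x,y)`. -/
noncomputable def dGap (T : X → X) (n : ℕ) (δ : ℝ) (x y : X) : ℝ :=
  1 - ((sSup {k : ℕ | DMatching T x y n δ k} : ℕ) : ℝ) / n

/-- `f̄_δ(x,y) = limsup_{n → ∞} f̄_{n,δ}(x,y)`. -/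
noncomputable def dFKdist (T : X → X) (δ : ℝ) (x y : X) : ℝ :=
  Filter.limsup (fun n : ℕ => dGap T n δ x y) Filter.atTop

/-- The discrete Feldman–Katok pseudometric. -/
noncomputable def dRhoFK (T : X → X) (x y : X) : ℝ :=
  sInf {δ : ℝ | 0 < δ ∧ dFKdist T δ x y ≤ δ}

variable [MeasurableSpace X] [BorelSpace X]

/-- The `t`-empirical measure `μ_{x,t} = (1/t) ∫_0^t δ_{φ^s x} ds`. -/
noncomputable def empMeasure (Φ : ℝ → X → X) (x : X) (t : ℝ) : Measure X :=
  (ENNReal.ofReal (1 / t)) • Measure.map (fun s => Φ s x) (volume.restrict (Icc 0 t))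

/-- `x` is generic for `μ`: empirical measures converge to `μ` in the weak* topology. -/
def Generic (Φ : ℝ → X → X) (μ : Measure X) (x : X) : Prop :=
  ∀ f : C(X, ℝ), Tendsto (fun t => ∫ z, f z ∂(empMeasure Φ x t)) atTop (𝓝 (∫ z, f z ∂μ))

def FlowInvariant (Φ : ℝ → X → X) (μ : Measure X) : Prop :=
  ∀ t : ℝ, MeasurePreserving (Φ t) μ μ

def FlowErgodic (Φ : ℝ → X → X) (μ : Measure X) : Prop :=
  FlowInvariant Φ μ ∧
    ∀ A : Set X, MeasurableSet A → (∀ t, Φ t ⁻¹' A = A) → μ A = 0 ∨ μ A = 1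

/-- The Prokhorov metric. -/
noncomputable def prokhorov (μ ν : Measure X) : ℝ :=
  sInf {ε : ℝ | 0 < ε ∧ ∀ B : Set X, MeasurableSet B →
    μ B ≤ ν (Metric.thickening ε B) + ENNReal.ofReal ε}

/-- A finite Borel partition of `X`, indexed by `ℕ` with all but finitely many cells empty. -/
structure BPartition (X : Type*) [MeasurableSpace X] where
  cells : ℕ → Set X
  measurable : ∀ j, MeasurableSet (cells j)
  disj : Pairwise (Function.onFun Disjoint cells)
  cover : ⋃ j, cells j = Set.univ
  finite : ∃ n, ∀ j, n ≤ j → cells j = ∅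

/-- The partition pseudometric `d_μ(P,Q)` (infimum over orderings of
`μ {x : P(x) ≠ Q(x)}`). -/
noncomputable def dPart (μ : Measure X) (P Q : ℕ → Set X) : ℝ :=
  ⨅ σ : Equiv.Perm ℕ, (μ (⋃ j, P j \ Q (σ j))).toReal

/-- `(t,ε,P)`-matchability with respect to a partition `P` (Ratner). -/
def PMatchable (Φ : ℝ → X → X) (P : ℕ → Set X) (x y : X) (t ε : ℝ) : Prop :=
  ∃ (A A' : Set ℝ) (h h' : ℝ → ℝ),
    MeasurableSet A ∧ MeasurableSet A' ∧
    A ⊆ Icc 0 t ∧ A' ⊆ Icc 0 t ∧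
    ENNReal.ofReal ((1 - ε) * t) < volume A ∧
    ENNReal.ofReal ((1 - ε) * t) < volume A' ∧
    MapsTo h A A' ∧ SurjOn h A A' ∧ StrictMonoOn h A ∧
    (∀ B ⊆ A, MeasurableSet B → volume (h '' B) = ENNReal.ofReal (∫ s in B, h' s)) ∧
    (∀ s ∈ A, |h' s - 1| < ε) ∧
    (∀ s ∈ A, ∀ j, Φ s x ∈ P j ↔ Φ (h s) y ∈ P j)

/-- `f_t(x,y,P)`. -/
noncomputable def fPart (Φ : ℝ → X → X) (P : ℕ → Set X) (t : ℝ) (x y : X) : ℝ :=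
  sInf ({ε : ℝ | 0 < ε ∧ PMatchable Φ P x y t ε} ∪ {1})

/-- The `(t,P)`-ball of radius `ε` centered at `x`. -/
def PBall (Φ : ℝ → X → X) (P : ℕ → Set X) (t ε : ℝ) (x : X) : Set X :=
  {y | fPart Φ P t x y < ε}

/-- `K_t(ε,P)`: minimal cardinality of an `(ε,t,P)`-cover (`⊤` if none exists). -/
noncomputable def Kt (μ : Measure X) (Φ : ℝ → X → X) (P : ℕ → Set X) (ε t : ℝ) : ℝ≥0∞ :=
  sInf ((fun C : Finset X => (C.card : ℝ≥0∞)) ''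
    {C : Finset X | ENNReal.ofReal (1 - ε) < μ (⋃ x ∈ C, PBall Φ P t ε x)})

/-- `β(u,ε,P) = liminf_{t→∞} log K_t(ε,P) / u(t)`. -/
noncomputable def betaU (μ : Measure X) (Φ : ℝ → X → X) (P : ℕ → Set X) (u : ℝ → ℝ)
    (ε : ℝ) : EReal :=
  Filter.liminf (fun t => ENNReal.log (Kt μ Φ P ε t) / (ENNReal.ofReal (u t) : EReal))
    Filter.atTop

/-- `e(u,P) = limsup_{ε→0⁺} β(u,ε,P)`. -/
noncomputable def eUP (μ : Measure X) (Φ : ℝ → X → X) (P : ℕ → Set X) (u : ℝ → ℝ) : EReal :=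
  Filter.limsup (fun ε => betaU μ Φ P u ε) (𝓝[>] (0 : ℝ))

/-- `e(Φ,u) = sup_P e(u,P)`. -/
noncomputable def ePhi (μ : Measure X) (Φ : ℝ → X → X) (u : ℝ → ℝ) : EReal :=
  ⨆ P : BPartition X, eUP μ Φ P.cells u

end FK


section AuxFK

variable {X Y : Type*} [MetricSpace X] [MetricSpace Y]

lemma aux_flow_nat (T : X → X) (Ψ : ℝ → Y → Y) (hΨ : IsFlow Ψ) (e : X → Y)
    (heT : ∀ a : X, Ψ 1 (e a) = e (T a)) :
    ∀ (m : ℕ) (a : X), Ψ (m : ℝ) (e a) = e (T^[m] a) := by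
  intro m
  induction m with
  | zero => intro a; simpa using hΨ.map_zero (e a)
  | succ m ih =>
    intro a
    have hcast : ((m + 1 : ℕ) : ℝ) = (m : ℝ) + 1 := by push_cast; ring
    rw [hcast, hΨ.map_add, ih, heT, Function.iterate_succ_apply']

lemma aux_Ico_disj (r : ℝ) {i j : ℕ} (hij : i ≠ j) :
    Disjoint (Ico ((i:ℝ) - r) ((i:ℝ) + 1 - r)) (Ico ((j:ℝ) - r) ((j:ℝ) + 1 - r)) := by
  rw [Set.disjoint_left]
  rintro u ⟨h1, h2⟩ ⟨h3, h4⟩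
  rcases hij.lt_or_gt with hlt | hlt
  · have : (i:ℝ) + 1 ≤ j := by exact_mod_cast Nat.succ_le_of_lt hlt
    linarith
  · have : (j:ℝ) + 1 ≤ i := by exact_mod_cast Nat.succ_le_of_lt hlt
    linarith

lemma aux_vol_blk (r : ℝ) (i : ℕ) :
    volume (Ico ((i:ℝ) - r) ((i:ℝ) + 1 - r)) = 1 := by
  rw [Real.volume_Ico]
  norm_num

lemma aux_img_add (a : ℝ) (S : Set ℝ) :
    (fun u : ℝ => u + a) '' S = (fun u : ℝ => u - a) ⁻¹' S := by
  ext z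
  simp only [Set.mem_image, Set.mem_preimage]
  constructor
  · rintro ⟨w, hw, rfl⟩; simpa using hw
  · intro hz; exact ⟨z - a, hz, by ring⟩

lemma aux_vol_img_add (a : ℝ) (S : Set ℝ) :
    volume ((fun u : ℝ => u + a) '' S) = volume S := by
  rw [aux_img_add]
  have : (fun u : ℝ => u - a) = (fun u : ℝ => u + (-a)) := by funext u; ring
  rw [this, measure_preimage_add_right]

lemma aux_matchable (T : X → X) (Ψ : ℝ → Y → Y) (hΨ : IsFlow Ψ) (e : X → Y)
    (he : ∀ a b : X, dist (e a) (e b) = dist a b)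
    (heT : ∀ a : X, Ψ 1 (e a) = e (T a))
    (x y : X) (r s : ℝ) (hr : r ∈ Set.Ico (0:ℝ) 1) (hs : s ∈ Set.Ico (0:ℝ) 1)
    {n : ℕ} {δ' δ ε t : ℝ} (hε : 0 < ε)
    (hδη : ∀ u ∈ Icc (0:ℝ) 1, ∀ p q : Y, dist p q < δ' → dist (Ψ u p) (Ψ u q) < δ)
    (D D' : Finset ℕ) (π : ℕ → ℕ)
    (hD : D ⊆ Finset.range n) (hD' : D' ⊆ Finset.range n)
    (hbij : Set.BijOn π ↑D ↑D') (hmono : StrictMonoOn π ↑D)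
    (hdd : ∀ i ∈ D, dist (T^[i] x) (T^[π i] y) < δ')
    (hnt : (n : ℝ) ≤ t)
    (h0t : 0 ≤ (1 - ε) * t)
    (hvol : (1 - ε) * t < (D.card : ℝ) - 2) :
    Matchable Ψ (Ψ r (e x)) (Ψ s (e y)) t ε δ := by
  obtain ⟨hr0, hr1⟩ := hr
  obtain ⟨hs0, hs1⟩ := hs
  classical
  set D2 : Finset ℕ := D.filter (fun i => 1 ≤ i ∧ 1 ≤ π i) with hD2def
  have hD2sub : D2 ⊆ D := Finset.filter_subset _ _
  -- cardinality bound
  have hc1 : (D.filter (fun i => π i = 0)).card ≤ 1 := by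
    rw [Finset.card_le_one]
    intro a ha b hb
    rw [Finset.mem_filter] at ha hb
    exact hmono.injOn (Finset.mem_coe.mpr ha.1) (Finset.mem_coe.mpr hb.1)
      (by rw [ha.2, hb.2])
  have hsd : (D \ D2).card ≤ 2 := by
    have hsub : D \ D2 ⊆ {0} ∪ D.filter (fun i => π i = 0) := by
      intro i hi
      rw [Finset.mem_sdiff] at hi
      obtain ⟨hiD, hiD2⟩ := hi
      rw [hD2def, Finset.mem_filter] at hiD2
      push_neg at hiD2
      rcases Nat.lt_or_ge i 1 with h1 | h1
      · simp [Nat.lt_one_iff.mp h1]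
      · have h2 := hiD2 hiD h1
        have h3 : π i = 0 := by omega
        exact Finset.mem_union_right _ (Finset.mem_filter.mpr ⟨hiD, h3⟩)
    calc (D \ D2).card ≤ ({0} ∪ D.filter (fun i => π i = 0)).card :=
          Finset.card_le_card hsub
      _ ≤ ({0} : Finset ℕ).card + (D.filter (fun i => π i = 0)).card :=
          Finset.card_union_le _ _
      _ ≤ 2 := by simp only [Finset.card_singleton]; omega
  have hcard2 : (D.card : ℝ) - 2 ≤ (D2.card : ℝ) := by
    have h1 := Finset.card_sdiff_add_card_eq_card hD2sub
    have h2 : D.card ≤ D2.card + 2 := by omega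
    have := (Nat.cast_le (α := ℝ)).mpr h2
    push_cast at this
    linarith
  -- blocks
  set blk : ℕ → Set ℝ := fun i => Ico ((i:ℝ) - r) ((i:ℝ) + 1 - r) with hblk
  set blk2 : ℕ → Set ℝ := fun j => Ico ((j:ℝ) - s) ((j:ℝ) + 1 - s) with hblk2
  set c : ℕ → ℝ := fun i => (π i : ℝ) - (i:ℝ) + r - s with hcdef
  set A : Set ℝ := ⋃ i ∈ D2, blk i with hA
  set A' : Set ℝ := ⋃ i ∈ D2, blk2 (π i) with hA'
  set hfun : ℝ → ℝ := fun u => u + c ⌊u + r⌋₊ with hhfun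
  have hbounds : ∀ i ∈ D2, 1 ≤ i ∧ i < n ∧ 1 ≤ π i ∧ π i < n := by
    intro i hi
    have h1 := Finset.mem_filter.mp hi
    have h2 : i < n := Finset.mem_range.mp (hD h1.1)
    have h3 : π i ∈ D' := Finset.mem_coe.mp (hbij.mapsTo (Finset.mem_coe.mpr h1.1))
    exact ⟨h1.2.1, h2, h1.2.2, Finset.mem_range.mp (hD' h3)⟩
  have hfloor : ∀ i ∈ D2, ∀ u ∈ blk i, ⌊u + r⌋₊ = i := by
    intro i hi u hu
    obtain ⟨h1, h2⟩ := hu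
    obtain ⟨hi1, _, _, _⟩ := hbounds i hi
    have hi1' : (1:ℝ) ≤ i := by exact_mod_cast hi1
    rw [Nat.floor_eq_iff (by linarith : (0:ℝ) ≤ u + r)]
    refine ⟨by push_cast; linarith, by push_cast; linarith⟩
  have hheq : ∀ i ∈ D2, ∀ u ∈ blk i, hfun u = u + c i := by
    intro i hi u hu
    simp only [hhfun]
    rw [hfloor i hi u hu]
  -- measurability
  have hmeasA : MeasurableSet A :=
    D2.measurableSet_biUnion (fun i _ => measurableSet_Ico)
  have hmeasA' : MeasurableSet A' :=
    D2.measurableSet_biUnion (fun i _ => measurableSet_Ico)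
  -- subsets
  have hsubA : A ⊆ Icc 0 t := by
    intro u hu
    rw [hA, mem_iUnion₂] at hu
    obtain ⟨i, hi, hmem⟩ := hu
    obtain ⟨h1, h2⟩ := hmem
    obtain ⟨hi1, hi2, _, _⟩ := hbounds i hi
    have c1 : (1:ℝ) ≤ i := by exact_mod_cast hi1
    have c2 : (i:ℝ) + 1 ≤ n := by exact_mod_cast Nat.succ_le_of_lt hi2
    exact ⟨by linarith, by linarith⟩
  have hsubA' : A' ⊆ Icc 0 t := by
    intro u hu
    rw [hA', mem_iUnion₂] at hu
    obtain ⟨i, hi, hmem⟩ := hu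
    obtain ⟨h1, h2⟩ := hmem
    obtain ⟨_, _, hp1, hp2⟩ := hbounds i hi
    have c1 : (1:ℝ) ≤ (π i : ℝ) := by exact_mod_cast hp1
    have c2 : ((π i : ℕ):ℝ) + 1 ≤ n := by exact_mod_cast Nat.succ_le_of_lt hp2
    exact ⟨by linarith, by linarith⟩
  -- injectivity of π on D2 (as distinct values)
  have hπne : ∀ i ∈ D2, ∀ j ∈ D2, i ≠ j → π i ≠ π j := by
    intro i hi j hj hij hpi
    exact hij (hmono.injOn (Finset.mem_coe.mpr (hD2sub hi))
      (Finset.mem_coe.mpr (hD2sub hj)) hpi)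
  -- volumes
  have hvolA : volume A = (D2.card : ℝ≥0∞) := by
    rw [hA, measure_biUnion_finset (fun i hi j hj hij => aux_Ico_disj r hij)
      (fun i _ => measurableSet_Ico)]
    simp [hblk, aux_vol_blk]
  have hvolA' : volume A' = (D2.card : ℝ≥0∞) := by
    rw [hA', measure_biUnion_finset
      (fun i hi j hj hij => aux_Ico_disj s (hπne i hi j hj hij))
      (fun i _ => measurableSet_Ico)]
    simp [hblk2, aux_vol_blk]
  have hltcard : (1 - ε) * t < (D2.card : ℝ) := lt_of_lt_of_le hvol hcard2
  have hvolA_lt : ENNReal.ofReal ((1 - ε) * t) < volume A := by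
    rw [hvolA, ← ENNReal.ofReal_natCast]
    rw [ENNReal.ofReal_lt_ofReal_iff (lt_of_le_of_lt h0t hltcard)]
    exact hltcard
  have hvolA'_lt : ENNReal.ofReal ((1 - ε) * t) < volume A' := by
    rw [hvolA', ← ENNReal.ofReal_natCast]
    rw [ENNReal.ofReal_lt_ofReal_iff (lt_of_le_of_lt h0t hltcard)]
    exact hltcard
  -- maps to
  have himgblk : ∀ i ∈ D2, ∀ u ∈ blk i, u + c i ∈ blk2 (π i) := by
    intro i hi u hu
    obtain ⟨h1, h2⟩ := hu
    constructor
    · simp only [hcdef]; linarith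
    · simp only [hcdef]; linarith
  have hmaps : MapsTo hfun A A' := by
    intro u hu
    rw [hA, mem_iUnion₂] at hu
    obtain ⟨i, hi, hmem⟩ := hu
    rw [hA', mem_iUnion₂]
    refine ⟨i, hi, ?_⟩
    rw [hheq i hi u hmem]
    exact himgblk i hi u hmem
  have hsurj : SurjOn hfun A A' := by
    intro v hv
    rw [hA', mem_iUnion₂] at hv
    obtain ⟨i, hi, hmem⟩ := hv
    obtain ⟨h1, h2⟩ := hmem
    have hvblk : v - c i ∈ blk i := by
      constructor
      · simp only [hcdef] at h1 ⊢; linarith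
      · simp only [hcdef] at h2 ⊢; linarith
    refine ⟨v - c i, ?_, ?_⟩
    · rw [hA, mem_iUnion₂]; exact ⟨i, hi, hvblk⟩
    · rw [hheq i hi _ hvblk]; ring
  -- strict mono
  have hsm : StrictMonoOn hfun A := by
    intro u1 hu1 u2 hu2 hlt
    rw [hA, mem_iUnion₂] at hu1 hu2
    obtain ⟨i, hi, hm1⟩ := hu1
    obtain ⟨j, hj, hm2⟩ := hu2
    rw [hheq i hi u1 hm1, hheq j hj u2 hm2]
    obtain ⟨a1, a2⟩ := hm1
    obtain ⟨b1, b2⟩ := hm2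
    rcases eq_or_ne i j with rfl | hij
    · linarith
    · have hij' : i < j := by
        by_contra hcon
        push_neg at hcon
        have hji : j < i := lt_of_le_of_ne hcon hij.symm
        have : (j:ℝ) + 1 ≤ i := by exact_mod_cast Nat.succ_le_of_lt hji
        linarith
      have hpi : π i < π j := hmono (Finset.mem_coe.mpr (hD2sub hi))
        (Finset.mem_coe.mpr (hD2sub hj)) hij'
      have hpi' : (π i : ℝ) + 1 ≤ (π j : ℝ) := by
        exact_mod_cast Nat.succ_le_of_lt hpi
      have hii : (i:ℝ) + 1 ≤ (j:ℝ) := by exact_mod_cast Nat.succ_le_of_lt hij'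
      simp only [hcdef]
      linarith
  -- integral condition
  have hAfin : volume A < ⊤ := by rw [hvolA]; exact ENNReal.natCast_lt_top _
  have hint : ∀ B ⊆ A, MeasurableSet B →
      volume (hfun '' B) = ENNReal.ofReal (∫ u in B, (fun _ : ℝ => (1:ℝ)) u) := by
    intro B hB hBm
    have hBfin : volume B ≠ ⊤ := (lt_of_le_of_lt (measure_mono hB) hAfin).ne
    have hRHS : (∫ u in B, (fun _ : ℝ => (1:ℝ)) u) = (volume B).toReal := by
      simp [Measure.real_def]
    rw [hRHS, ENNReal.ofReal_toReal hBfin]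
    have hBdecomp : B = ⋃ i ∈ D2, B ∩ blk i := by
      ext u
      simp only [mem_iUnion₂, mem_inter_iff]
      constructor
      · intro hu
        have huA := hB hu
        rw [hA, mem_iUnion₂] at huA
        obtain ⟨i, hi, hmem⟩ := huA
        exact ⟨i, hi, hu, hmem⟩
      · rintro ⟨i, hi, hu, _⟩; exact hu
    have himg : hfun '' B = ⋃ i ∈ D2, (fun u => u + c i) '' (B ∩ blk i) := by
      conv_lhs => rw [hBdecomp]
      rw [Set.image_iUnion₂]
      refine iUnion₂_congr (fun i hi => ?_)
      exact Set.image_congr (fun u hu => hheq i hi u hu.2)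
    have hdisjim : ∀ i ∈ (D2 : Set ℕ), ∀ j ∈ (D2 : Set ℕ), i ≠ j →
        Disjoint ((fun u => u + c i) '' (B ∩ blk i))
          ((fun u => u + c j) '' (B ∩ blk j)) := by
      intro i hi j hj hij
      have h1 : (fun u => u + c i) '' (B ∩ blk i) ⊆ blk2 (π i) := by
        rintro z ⟨w, hw, rfl⟩
        exact himgblk i hi w hw.2
      have h2 : (fun u => u + c j) '' (B ∩ blk j) ⊆ blk2 (π j) := by
        rintro z ⟨w, hw, rfl⟩
        exact himgblk j hj w hw.2
      exact (aux_Ico_disj s (hπne i hi j hj hij)).mono h1 h2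
    have hmeasim : ∀ i ∈ D2, MeasurableSet ((fun u => u + c i) '' (B ∩ blk i)) := by
      intro i _
      rw [aux_img_add]
      exact (hBm.inter measurableSet_Ico).preimage (measurable_id.sub_const _)
    rw [himg, measure_biUnion_finset hdisjim hmeasim]
    have hstep : ∀ i ∈ D2,
        volume ((fun u => u + c i) '' (B ∩ blk i)) = volume (B ∩ blk i) :=
      fun i _ => aux_vol_img_add _ _
    rw [Finset.sum_congr rfl hstep,
      ← measure_biUnion_finset
        (fun i hi j hj hij =>
          (aux_Ico_disj r hij).mono inter_subset_right inter_subset_right)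
        (fun i _ => hBm.inter measurableSet_Ico),
      ← hBdecomp]
  -- distance condition
  have hdistc : ∀ u ∈ A, dist (Ψ u (Ψ r (e x))) (Ψ (hfun u) (Ψ s (e y))) < δ := by
    intro u hu
    rw [hA, mem_iUnion₂] at hu
    obtain ⟨i, hi, hmem⟩ := hu
    obtain ⟨h1, h2⟩ := hmem
    have hiD : i ∈ D := hD2sub hi
    have hv0 : 0 ≤ u + r - (i:ℝ) := by linarith
    have hv1 : u + r - (i:ℝ) ≤ 1 := by linarith
    have e1 : Ψ u (Ψ r (e x)) = Ψ (u + r - (i:ℝ)) (e (T^[i] x)) := by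
      rw [← hΨ.map_add r u]
      have hre : r + u = (i:ℝ) + (u + r - (i:ℝ)) := by ring
      rw [hre, hΨ.map_add, aux_flow_nat T Ψ hΨ e heT i x]
    have e2 : Ψ (hfun u) (Ψ s (e y)) = Ψ (u + r - (i:ℝ)) (e (T^[π i] y)) := by
      rw [← hΨ.map_add s (hfun u)]
      have hse : s + hfun u = ((π i : ℕ):ℝ) + (u + r - (i:ℝ)) := by
        rw [hheq i hi u ⟨h1, h2⟩]
        simp only [hcdef]
        ring
      rw [hse, hΨ.map_add, aux_flow_nat T Ψ hΨ e heT (π i) y]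
    rw [e1, e2]
    apply hδη _ ⟨hv0, hv1⟩
    rw [he]
    exact hdd i hiD
  exact ⟨A, A', hfun, fun _ => 1, hmeasA, hmeasA', hsubA, hsubA', hvolA_lt,
    hvolA'_lt, hmaps, hsurj, hsm, hint, fun u _ => by simpa using hε, hdistc⟩

lemma aux_dMatching_zero (T : X → X) (x y : X) (n : ℕ) (δ : ℝ) :
    DMatching T x y n δ 0 := by
  refine ⟨∅, ∅, id, by simp, by simp, by simp, ?_, ?_, by simp⟩
  · simpa using Set.bijOn_empty (id : ℕ → ℕ)
  · simp only [Finset.coe_empty]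
    exact fun a ha => absurd ha (Set.notMem_empty a)

lemma aux_dGap_mem (T : X → X) (x y : X) (n : ℕ) (δ : ℝ) :
    DMatching T x y n δ (sSup {k | DMatching T x y n δ k}) ∧
      sSup {k | DMatching T x y n δ k} ≤ n := by
  have hne : {k | DMatching T x y n δ k}.Nonempty := ⟨0, aux_dMatching_zero T x y n δ⟩
  have hub : ∀ k ∈ {k | DMatching T x y n δ k}, k ≤ n := by
    rintro k ⟨D, D', π, hD, _, hcard, _⟩
    calc k = D.card := hcard.symm
      _ ≤ (Finset.range n).card := Finset.card_le_card hD
      _ = n := Finset.card_range n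
  exact ⟨Nat.sSup_mem hne ⟨n, hub⟩, csSup_le hne hub⟩

lemma aux_dGap_nonneg (T : X → X) (x y : X) (n : ℕ) (δ : ℝ) :
    0 ≤ dGap T n δ x y := by
  have hkn := (aux_dGap_mem T x y n δ).2
  rw [dGap]
  rcases Nat.eq_zero_or_pos n with rfl | hn
  · have : sSup {k | DMatching T x y 0 δ k} = 0 := Nat.le_zero.mp hkn
    simp [this]
  · have hd : ((sSup {k | DMatching T x y n δ k} : ℕ):ℝ) / (n:ℝ) ≤ 1 := by
      rw [div_le_one (by exact_mod_cast hn)]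
      exact_mod_cast hkn
    linarith

lemma aux_dGap_le_one (T : X → X) (x y : X) (n : ℕ) (δ : ℝ) :
    dGap T n δ x y ≤ 1 := by
  rw [dGap]
  have : (0:ℝ) ≤ ((sSup {k | DMatching T x y n δ k} : ℕ):ℝ) / (n:ℝ) := by positivity
  linarith

lemma aux_fkGap_nonneg (Φ : ℝ → Y → Y) (t δ : ℝ) (x y : Y) :
    0 ≤ fkGap Φ t δ x y := by
  rw [fkGap]
  apply Real.sInf_nonneg
  rintro z (⟨hz, _⟩ | hz)
  · exact hz.le
  · rw [Set.mem_singleton_iff] at hz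
    rw [hz]; exact zero_le_one

end AuxFK

set_option maxHeartbeats 2000000 in
theorem stmt6 {X Y : Type*} [MetricSpace X] [CompactSpace X]
    [MetricSpace Y] [CompactSpace Y]
    (hdiam : Metric.diam (Set.univ : Set X) ≤ 1)
    (T : X ≃ₜ X) (Ψ : ℝ → Y → Y) (hΨ : IsFlow Ψ) (e : X → Y)
    (he : ∀ a b : X, dist (e a) (e b) = dist a b)
    (heT : ∀ a : X, Ψ 1 (e a) = e (T a))
    (x y : X) (h : dRhoFK (⇑T) x y = 0)
    (r s : ℝ) (hr : r ∈ Set.Ico (0:ℝ) 1) (hs : s ∈ Set.Ico (0:ℝ) 1) :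
    rhoFK Ψ (Ψ r (e x)) (Ψ s (e y)) = 0 := by
  -- uniform continuity of the flow in the space variable, uniformly on time `[0,1]`
  have hUC : ∀ δc : ℝ, 0 < δc → ∃ η > 0, ∀ u ∈ Icc (0:ℝ) 1, ∀ p q : Y,
      dist p q < η → dist (Ψ u p) (Ψ u q) < δc := by
    intro δc hδc
    have hK : IsCompact ((Icc (0:ℝ) 1) ×ˢ (univ : Set Y)) :=
      isCompact_Icc.prod isCompact_univ
    have h2 := hK.uniformContinuousOn_of_continuous hΨ.cont.continuousOn
    rw [Metric.uniformContinuousOn_iff] at h2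
    obtain ⟨η, hη, hm⟩ := h2 δc hδc
    refine ⟨η, hη, fun u hu p q hpq => ?_⟩
    refine hm (u, p) ⟨hu, mem_univ _⟩ (u, q) ⟨hu, mem_univ _⟩ ?_
    simp only [Prod.dist_eq, dist_self]
    exact max_lt hη hpq
  have hone : dFKdist (⇑T) 1 x y ≤ 1 := by
    rw [dFKdist]
    have hb : Filter.IsBoundedUnder (· ≥ ·) Filter.atTop
        (fun n : ℕ => dGap (⇑T) n 1 x y) :=
      Filter.isBoundedUnder_of ⟨0, fun n => aux_dGap_nonneg (⇑T) x y n 1⟩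
    exact Filter.limsup_le_of_le hb.isCoboundedUnder_flip
      (Filter.Eventually.of_forall (fun n => aux_dGap_le_one (⇑T) x y n 1))
  have hdisc : ∀ cc : ℝ, 0 < cc →
      ∃ δ', (0 < δ' ∧ dFKdist (⇑T) δ' x y ≤ δ') ∧ δ' < cc := by
    intro cc hcc
    have hne : {δ : ℝ | 0 < δ ∧ dFKdist (⇑T) δ x y ≤ δ}.Nonempty := ⟨1, one_pos, hone⟩
    have heq : sInf {δ : ℝ | 0 < δ ∧ dFKdist (⇑T) δ x y ≤ δ} = 0 := h
    exact exists_lt_of_csInf_lt hne (heq.trans_lt hcc)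
  have hmain : ∀ ε : ℝ, 0 < ε →
      ∃ δ0 ∈ {δ : ℝ | 0 < δ ∧ fkDist Ψ δ (Ψ r (e x)) (Ψ s (e y)) < δ}, δ0 ≤ ε := by
    intro ε hε
    set δ0 := min ε 1 with hδ0def
    have hδ0 : 0 < δ0 := lt_min hε one_pos
    have hδ01 : δ0 ≤ 1 := min_le_right _ _
    refine ⟨δ0, ⟨hδ0, ?_⟩, min_le_left _ _⟩
    set ε₀ := δ0 / 2 with hε₀def
    have hε₀pos : 0 < ε₀ := by positivity
    have hε₀le : ε₀ ≤ 1/2 := by rw [hε₀def]; linarith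
    obtain ⟨η, hη, hUCη⟩ := hUC δ0 hδ0
    obtain ⟨δ', ⟨hδ'pos, hδ'le⟩, hδ'lt⟩ := hdisc (min η (ε₀/4)) (by positivity)
    have hδ'η : δ' < η := lt_of_lt_of_le hδ'lt (min_le_left _ _)
    have hδ'ε : δ' < ε₀/4 := lt_of_lt_of_le hδ'lt (min_le_right _ _)
    have hev : ∀ᶠ n : ℕ in atTop, dGap (⇑T) n δ' x y < 2*δ' := by
      refine Filter.eventually_lt_of_limsup_lt ?_ ?_
      · exact lt_of_le_of_lt hδ'le (by linarith)
      · exact Filter.isBoundedUnder_of ⟨1, fun n => aux_dGap_le_one (⇑T) x y n δ'⟩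
    obtain ⟨N, hN⟩ := Filter.eventually_atTop.mp hev
    have hfk : ∀ᶠ t : ℝ in atTop, fkGap Ψ t δ0 (Ψ r (e x)) (Ψ s (e y)) ≤ ε₀ := by
      filter_upwards [Filter.eventually_ge_atTop ((N:ℝ) + 6/ε₀ + 2)] with t ht
      have h6 : 0 < 6/ε₀ := by positivity
      have hN0 : (0:ℝ) ≤ N := Nat.cast_nonneg N
      have ht1 : (1:ℝ) ≤ t := by linarith
      set n := ⌊t⌋₊ with hndef
      have htn : (n:ℝ) ≤ t := Nat.floor_le (by linarith)
      have htn2 : t - 1 < (n:ℝ) := Nat.sub_one_lt_floor t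
      have hnN : N ≤ n := Nat.le_floor (by push_cast; linarith)
      have hn1 : 1 ≤ n := Nat.le_floor (by push_cast; linarith)
      have hgap := hN n hnN
      obtain ⟨hmatch, hkn⟩ := aux_dGap_mem (⇑T) x y n δ'
      set k := sSup {k | DMatching (⇑T) x y n δ' k} with hkdef
      have hnpos : (0:ℝ) < (n:ℝ) := by exact_mod_cast hn1
      have hk : (1 - 2*δ') * (n:ℝ) < (k:ℝ) := by
        rw [dGap, ← hkdef] at hgap
        have hd : 1 - 2*δ' < (k:ℝ)/(n:ℝ) := by linarith
        exact (lt_div_iff₀ hnpos).mp hd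
      obtain ⟨D, D', π, hD, hD', hcard, hbij, hmono, hdd⟩ := hmatch
      have hε₀t : 6 ≤ ε₀ * t := by
        have h1 : 6/ε₀ ≤ t := by linarith
        calc (6:ℝ) = ε₀ * (6/ε₀) := by field_simp
          _ ≤ ε₀ * t := by nlinarith
      have hpos2 : (0:ℝ) < 1 - 2*δ' := by linarith
      have e1 : t - 1 - 2*δ'*t + 2*δ' ≤ (1 - 2*δ') * (n:ℝ) := by
        nlinarith [mul_nonneg hpos2.le (by linarith : (0:ℝ) ≤ (n:ℝ) - (t-1))]
      have e3 : 2*δ'*t ≤ (ε₀/2)*t := by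
        nlinarith [mul_nonneg (by linarith : (0:ℝ) ≤ ε₀/2 - 2*δ')
          (by linarith : (0:ℝ) ≤ t)]
      have hvolc : (1 - ε₀) * t < (D.card : ℝ) - 2 := by
        rw [hcard]
        linarith
      have h0t : 0 ≤ (1 - ε₀) * t :=
        mul_nonneg (by linarith) (by linarith)
      rw [fkGap]
      apply csInf_le
      · refine ⟨0, ?_⟩
        rintro z (⟨hz, _⟩ | hz)
        · exact hz.le
        · rw [Set.mem_singleton_iff] at hz
          rw [hz]; exact zero_le_one
      · exact Set.mem_union_left _ ⟨hε₀pos,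
          aux_matchable (⇑T) Ψ hΨ e he heT x y r s hr hs hε₀pos
            (fun u hu p q hpq => hUCη u hu p q (hpq.trans hδ'η)) D D' π hD hD'
            hbij hmono hdd htn h0t hvolc⟩
    have hlim : fkDist Ψ δ0 (Ψ r (e x)) (Ψ s (e y)) ≤ ε₀ := by
      rw [fkDist]
      have hb : Filter.IsBoundedUnder (· ≥ ·) Filter.atTop
          (fun t : ℝ => fkGap Ψ t δ0 (Ψ r (e x)) (Ψ s (e y))) :=
        Filter.isBoundedUnder_of
          ⟨0, fun t => aux_fkGap_nonneg Ψ t δ0 (Ψ r (e x)) (Ψ s (e y))⟩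
      exact Filter.limsup_le_of_le hb.isCoboundedUnder_flip hfk
    have hhalflt : ε₀ < δ0 := by rw [hε₀def]; linarith
    exact lt_of_le_of_lt hlim hhalflt
  have h0 : 0 ≤ rhoFK Ψ (Ψ r (e x)) (Ψ s (e y)) := by
    rw [rhoFK]
    exact Real.sInf_nonneg (fun δ hδ => hδ.1.le)
  have hle : ∀ ε : ℝ, 0 < ε → rhoFK Ψ (Ψ r (e x)) (Ψ s (e y)) ≤ ε := by
    intro ε hε
    obtain ⟨δ0, hδ0mem, hδ0le⟩ := hmain ε hε
    rw [rhoFK]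
    exact le_trans (csInf_le ⟨0, fun a ha => ha.1.le⟩ hδ0mem) hδ0le
  by_contra hne
  have hpos : 0 < rhoFK Ψ (Ψ r (e x)) (Ψ s (e y)) := lt_of_le_of_ne h0 (Ne.symm hne)
  have hhalf := hle _ (half_pos hpos)
  linarith
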